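/- For all x ≥ 0 and thresholds 0 ≤ θ_th < Δ/2 and d_min ≤ d_th < d_max, the conditional CDF of the effective channel gain of a user in the weak two-bit group satisfies P( G ≤ x | |Θ − θ̄| ≥ θ_th and D ≥ d_th ) = (1/ξ) ∫_{d_th}^{d_max} [ ∫_{θ̄−Δ/2}^{θ̄−θ_th} ( 1 − exp( −PL(r)·x/(F_M(θ̄,θ)·σ²) ) ) dθ + ∫_{θ̄+θ_th}^{θ̄+Δ/2} ( 1 − exp( −PL(r)·x/(F_M(θ̄,θ)·σ²) ) ) dθ ] · r dr, where ξ = (Δ/2 − θ_th)·(d_max² − d_th²). -/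

import Mathlib

open MeasureTheory ProbabilityTheory

/-- The Fejér kernel `F_M(θ̄, θ)`. -/
noncomputable def fejer (M : ℕ) (θbar θ : ℝ) : ℝ :=
  (Real.sin (Real.pi * M * (Real.sin θbar - Real.sin θ) / 2) /
    (M * Real.sin (Real.pi * (Real.sin θbar - Real.sin θ) / 2))) ^ 2

set_option maxHeartbeats 1000000 in
theorem cdf_effective_gain_weak_two_bit
    {Ω : Type*} [MeasurableSpace Ω] (P : Measure Ω) [IsProbabilityMeasure P]
    (dmin dmax Δ θbar σ : ℝ) (M : ℕ)
    (hdmin : 0 ≤ dmin) (hdd : dmin < dmax) (hΔ : 0 < Δ) (hσ : 0 < σ) (hM : 1 ≤ M)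
    (D Θ X : Ω → ℝ) (hD : Measurable D) (hΘ : Measurable Θ) (hX : Measurable X)
    (hlaw : Measure.map (fun ω => (D ω, Θ ω)) P
      = volume.withDensity (fun p : ℝ × ℝ => ENNReal.ofReal
          (if dmin ≤ p.1 ∧ p.1 ≤ dmax ∧ |p.2 - θbar| ≤ Δ / 2 then
            2 * p.1 / ((dmax ^ 2 - dmin ^ 2) * Δ) else 0)))
    (hXexp : ∀ x : ℝ, 0 ≤ x → (P {ω | x < X ω}).toReal = Real.exp (-x / σ ^ 2))
    (hindep : IndepFun X (fun ω => (D ω, Θ ω)) P)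
    (PL : ℝ → ℝ) (hPL : Measurable PL)
    (hPLpos : ∀ r, dmin ≤ r → r ≤ dmax → 0 < PL r)
    (hFM : ∀ θ, |θ - θbar| ≤ Δ / 2 → 0 < fejer M θbar θ)
    (G : Ω → ℝ) (hG : G = fun ω => X ω * fejer M θbar (Θ ω) / PL (D ω))
    (x θth dth : ℝ) (hx : 0 ≤ x)
    (hθth : 0 ≤ θth) (hθth' : θth < Δ / 2)
    (hdth : dmin ≤ dth) (hdth' : dth < dmax) :
    (P {ω | G ω ≤ x ∧ θth ≤ |Θ ω - θbar| ∧ dth ≤ D ω}).toReal /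
        (P {ω | θth ≤ |Θ ω - θbar| ∧ dth ≤ D ω}).toReal
      = (1 / ((Δ / 2 - θth) * (dmax ^ 2 - dth ^ 2))) *
          ∫ r in dth..dmax,
            ((∫ θ in (θbar - Δ / 2)..(θbar - θth),
                (1 - Real.exp (-(PL r * x) / (fejer M θbar θ * σ ^ 2)))) +
             (∫ θ in (θbar + θth)..(θbar + Δ / 2),
                (1 - Real.exp (-(PL r * x) / (fejer M θbar θ * σ ^ 2))))) * r := by
  classical
  have hdmax : (0:ℝ) < dmax := lt_of_le_of_lt hdmin hdd
  have hσ2 : (0:ℝ) < σ ^ 2 := by positivity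
  have hsq' : dth ^ 2 < dmax ^ 2 := by nlinarith
  have hsq : dmin ^ 2 < dmax ^ 2 := by nlinarith
  have hC : (0:ℝ) < (dmax ^ 2 - dmin ^ 2) * Δ := mul_pos (by linarith) hΔ
  set C : ℝ := (dmax ^ 2 - dmin ^ 2) * Δ with hCdef
  set K : ℝ := ∫ r in dth..dmax,
            ((∫ θ in (θbar - Δ / 2)..(θbar - θth),
                (1 - Real.exp (-(PL r * x) / (fejer M θbar θ * σ ^ 2)))) +
             (∫ θ in (θbar + θth)..(θbar + Δ / 2),
                (1 - Real.exp (-(PL r * x) / (fejer M θbar θ * σ ^ 2))))) * r with hKdef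
  set fd : ℝ × ℝ → ℝ := fun p =>
    if dmin ≤ p.1 ∧ p.1 ≤ dmax ∧ |p.2 - θbar| ≤ Δ / 2 then 2 * p.1 / C else 0 with hfdef
  have hlaw' : Measure.map (fun ω => (D ω, Θ ω)) P
      = volume.withDensity (fun p => ENNReal.ofReal (fd p)) := by
    simpa only [hfdef] using hlaw
  have hbox_meas : MeasurableSet {p : ℝ × ℝ | dmin ≤ p.1 ∧ p.1 ≤ dmax ∧ |p.2 - θbar| ≤ Δ / 2} := by
    refine (measurableSet_le measurable_const measurable_fst).inter
      ((measurableSet_le measurable_fst measurable_const).inter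
        (measurableSet_le ((measurable_snd.sub measurable_const).abs) measurable_const))
  have hfd_meas : Measurable fd :=
    Measurable.ite hbox_meas ((measurable_fst.const_mul 2).div_const C) measurable_const
  have hFmeas : Measurable (fejer M θbar) := by
    unfold fejer
    apply Measurable.pow_const
    apply Measurable.div
    · exact Real.measurable_sin.comp
        ((measurable_const.mul (measurable_const.sub Real.measurable_sin)).div_const 2)
    · exact measurable_const.mul
        (Real.measurable_sin.comp
          ((measurable_const.mul (measurable_const.sub Real.measurable_sin)).div_const 2))
  set T : Set ℝ := Set.Icc (θbar - Δ / 2) (θbar - θth) ∪ Set.Icc (θbar + θth) (θbar + Δ / 2)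
    with hTdef
  set B : Set (ℝ × ℝ) := Set.Icc dth dmax ×ˢ T with hBdef
  have hTmeas : MeasurableSet T := measurableSet_Icc.union measurableSet_Icc
  have hBmeas : MeasurableSet B := measurableSet_Icc.prod hTmeas
  have hTmem : ∀ θ : ℝ, θ ∈ T ↔ θth ≤ |θ - θbar| ∧ |θ - θbar| ≤ Δ / 2 := by
    intro θ
    simp only [hTdef, Set.mem_union, Set.mem_Icc]
    constructor
    · rintro (⟨h1, h2⟩ | ⟨h1, h2⟩)
      · exact ⟨le_abs.2 (Or.inr (by linarith)), abs_le.2 ⟨by linarith, by linarith⟩⟩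
      · exact ⟨le_abs.2 (Or.inl (by linarith)), abs_le.2 ⟨by linarith, by linarith⟩⟩
    · rintro ⟨h1, h2⟩
      rw [abs_le] at h2
      rcases le_abs.1 h1 with h | h
      · exact Or.inr ⟨by linarith, by linarith⟩
      · exact Or.inl ⟨by linarith, by linarith⟩
  have hBmem : ∀ p : ℝ × ℝ, p ∈ B ↔
      (dth ≤ p.1 ∧ p.1 ≤ dmax) ∧ (θth ≤ |p.2 - θbar| ∧ |p.2 - θbar| ≤ Δ / 2) := by
    intro p
    rw [hBdef, Set.mem_prod, Set.mem_Icc, hTmem]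
  have hBbox : ∀ p ∈ B, dmin ≤ p.1 ∧ p.1 ≤ dmax ∧ |p.2 - θbar| ≤ Δ / 2 := by
    intro p hp
    obtain ⟨⟨h1, h2⟩, _, h4⟩ := (hBmem p).1 hp
    exact ⟨le_trans hdth h1, h2, h4⟩
  set E : ℝ × ℝ → ℝ := fun p => 1 - Real.exp (-(PL p.1 * x) / (fejer M θbar p.2 * σ ^ 2))
    with hEdef
  have hEmeas : Measurable E := by
    apply measurable_const.sub
    exact Real.measurable_exp.comp
      ((((hPL.comp measurable_fst).mul measurable_const).neg).div
        ((hFmeas.comp measurable_snd).mul measurable_const))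
  have hexp_le : ∀ p : ℝ × ℝ, 0 < PL p.1 → 0 < fejer M θbar p.2 →
      Real.exp (-(PL p.1 * x) / (fejer M θbar p.2 * σ ^ 2)) ≤ 1 := by
    intro p h1 h2
    rw [← Real.exp_zero]
    apply Real.exp_le_exp.2
    apply div_nonpos_of_nonpos_of_nonneg
    · nlinarith
    · positivity
  have hE01 : ∀ p : ℝ × ℝ, 0 < PL p.1 → 0 < fejer M θbar p.2 → 0 ≤ E p ∧ E p ≤ 1 := by
    intro p h1 h2
    have h3 := hexp_le p h1 h2
    have h4 := Real.exp_pos (-(PL p.1 * x) / (fejer M θbar p.2 * σ ^ 2))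
    constructor
    · simp only [hEdef]; linarith
    · simp only [hEdef]; linarith
  have hDT : Measurable fun ω => (D ω, Θ ω) := hD.prodMk hΘ
  haveI hμprob : IsProbabilityMeasure (Measure.map (fun ω => (D ω, Θ ω)) P) :=
    Measure.isProbabilityMeasure_map hDT.aemeasurable
  haveI hνprob : IsProbabilityMeasure (Measure.map X P) :=
    Measure.isProbabilityMeasure_map hX.aemeasurable
  have hκ : Measure.map (fun ω => ((D ω, Θ ω), X ω)) P
      = (Measure.map (fun ω => (D ω, Θ ω)) P).prod (Measure.map X P) :=
    (indepFun_iff_map_prod_eq_prod_map_map hDT.aemeasurable hX.aemeasurable).1 hindep.symm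
  -- CDF of X
  have hνIic : ∀ s : ℝ, 0 ≤ s →
      Measure.map X P (Set.Iic s) = ENNReal.ofReal (1 - Real.exp (-s / σ ^ 2)) := by
    intro s hs
    have hmap : Measure.map X P (Set.Iic s) = P {ω | X ω ≤ s} := by
      rw [Measure.map_apply hX measurableSet_Iic]; rfl
    have hcompl : {ω | X ω ≤ s} = {ω | s < X ω}ᶜ := by
      ext ω; simp [not_lt]
    have hlt_meas : MeasurableSet {ω | s < X ω} := measurableSet_lt measurable_const hX
    have hval : P {ω | s < X ω} = ENNReal.ofReal (Real.exp (-s / σ ^ 2)) := by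
      rw [← ENNReal.ofReal_toReal (measure_ne_top P _), hXexp s hs]
    rw [hmap, hcompl, measure_compl hlt_meas (measure_ne_top P _), measure_univ, hval,
      ← ENNReal.ofReal_one, ← ENNReal.ofReal_sub _ (Real.exp_nonneg _)]
  -- (D, Θ) lies a.s. in the support box
  have hae : ∀ᵐ ω ∂P, dmin ≤ D ω ∧ D ω ≤ dmax ∧ |Θ ω - θbar| ≤ Δ / 2 := by
    rw [ae_iff]
    have hset : {ω | ¬(dmin ≤ D ω ∧ D ω ≤ dmax ∧ |Θ ω - θbar| ≤ Δ / 2)}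
        = (fun ω => (D ω, Θ ω)) ⁻¹'
            {p : ℝ × ℝ | dmin ≤ p.1 ∧ p.1 ≤ dmax ∧ |p.2 - θbar| ≤ Δ / 2}ᶜ := rfl
    rw [hset, ← Measure.map_apply hDT hbox_meas.compl, hlaw',
      withDensity_apply _ hbox_meas.compl]
    have hz : ∀ᵐ p ∂(volume : Measure (ℝ × ℝ)),
        p ∈ {p : ℝ × ℝ | dmin ≤ p.1 ∧ p.1 ≤ dmax ∧ |p.2 - θbar| ≤ Δ / 2}ᶜ →
          ENNReal.ofReal (fd p) = (0 : ENNReal) := by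
      apply ae_of_all
      intro p hp
      simp only [hfdef]
      rw [if_neg (by simpa using hp)]
      simp
    rw [setLIntegral_congr_fun_ae hbox_meas.compl hz, lintegral_zero]
  -- disjointness and measure of T
  have hdisj : AEDisjoint volume (Set.Icc (θbar - Δ / 2) (θbar - θth))
      (Set.Icc (θbar + θth) (θbar + Δ / 2)) := by
    have hsub : Set.Icc (θbar - Δ / 2) (θbar - θth) ∩ Set.Icc (θbar + θth) (θbar + Δ / 2)
        ⊆ Set.Icc (θbar + θth) (θbar - θth) := by
      rw [Set.Icc_inter_Icc]
      exact Set.Icc_subset_Icc (le_max_right _ _) (min_le_left _ _)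
    apply measure_mono_null hsub
    rw [Real.volume_Icc]
    simp only [ENNReal.ofReal_eq_zero]
    linarith
  have hTvol : (volume T).toReal = Δ - 2 * θth := by
    rw [hTdef, measure_union₀ measurableSet_Icc.nullMeasurableSet hdisj,
      Real.volume_Icc, Real.volume_Icc, ← ENNReal.ofReal_add (by linarith) (by linarith),
      ENNReal.toReal_ofReal (by linarith)]
    ring
  -- the event set for the numerator
  set S : Set ((ℝ × ℝ) × ℝ) :=
    (Prod.fst ⁻¹' B) ∩ {q : (ℝ × ℝ) × ℝ | q.2 ≤ x * PL q.1.1 / fejer M θbar q.1.2} with hSdef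
  have hSmeas : MeasurableSet S := by
    apply (measurable_fst hBmeas).inter
    exact measurableSet_le measurable_snd
      ((measurable_const.mul (hPL.comp (measurable_fst.comp measurable_fst))).div
        (hFmeas.comp (measurable_snd.comp measurable_fst)))
  have hnum_ae : {ω | G ω ≤ x ∧ θth ≤ |Θ ω - θbar| ∧ dth ≤ D ω}
      =ᵐ[P] (fun ω => ((D ω, Θ ω), X ω)) ⁻¹' S := by
    apply Filter.eventuallyEq_set.2
    filter_upwards [hae] with ω hω
    obtain ⟨hb1, hb2, hb3⟩ := hω
    have hPLω : 0 < PL (D ω) := hPLpos _ hb1 hb2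
    have hFω : 0 < fejer M θbar (Θ ω) := hFM _ hb3
    simp only [Set.mem_setOf_eq, Set.mem_preimage, hSdef, Set.mem_inter_iff, hBmem, hG]
    constructor
    · rintro ⟨h1, h2, h3⟩
      refine ⟨⟨⟨h3, hb2⟩, h2, hb3⟩, ?_⟩
      rw [div_le_iff₀ hPLω] at h1
      exact (le_div_iff₀ hFω).2 h1
    · rintro ⟨⟨⟨h3, _⟩, h2, _⟩, h4⟩
      refine ⟨?_, h2, h3⟩
      rw [div_le_iff₀ hPLω]
      exact (le_div_iff₀ hFω).1 h4
  have hden_ae : {ω | θth ≤ |Θ ω - θbar| ∧ dth ≤ D ω}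
      =ᵐ[P] (fun ω => (D ω, Θ ω)) ⁻¹' B := by
    apply Filter.eventuallyEq_set.2
    filter_upwards [hae] with ω hω
    obtain ⟨hb1, hb2, hb3⟩ := hω
    simp only [Set.mem_setOf_eq, Set.mem_preimage, hBmem]
    constructor
    · rintro ⟨h1, h2⟩; exact ⟨⟨h2, hb2⟩, h1, hb3⟩
    · rintro ⟨⟨h2, _⟩, h1, _⟩; exact ⟨h1, h2⟩
  -- numerator as a lintegral
  have hnum : P {ω | G ω ≤ x ∧ θth ≤ |Θ ω - θbar| ∧ dth ≤ D ω}
      = ∫⁻ p in B, ENNReal.ofReal (E p * (2 * p.1 / C)) := by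
    rw [measure_congr hnum_ae, ← Measure.map_apply (hDT.prodMk hX) hSmeas, hκ,
      Measure.prod_apply hSmeas]
    have hsec : ∀ p : ℝ × ℝ, Measure.map X P (Prod.mk p ⁻¹' S)
        = B.indicator (fun p => ENNReal.ofReal (E p)) p := by
      intro p
      by_cases hp : p ∈ B
      · have hPLp : 0 < PL p.1 := hPLpos _ (hBbox p hp).1 (hBbox p hp).2.1
        have hFp : 0 < fejer M θbar p.2 := hFM _ (hBbox p hp).2.2
        have hperm : Prod.mk p ⁻¹' S = Set.Iic (x * PL p.1 / fejer M θbar p.2) := by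
          ext t
          simp [hSdef, hp, Set.mem_Iic]
        rw [hperm, hνIic _ (by positivity), Set.indicator_of_mem hp]
        simp only [hEdef]
        rw [show -(x * PL p.1 / fejer M θbar p.2) / σ ^ 2
            = -(PL p.1 * x) / (fejer M θbar p.2 * σ ^ 2) by field_simp]
      · have hperm : Prod.mk p ⁻¹' S = ∅ := by
          ext t
          simp [hSdef, hp]
        rw [hperm, measure_empty, Set.indicator_of_notMem hp]
    have hfd' : Measurable fun p : ℝ × ℝ => ENNReal.ofReal (fd p) :=
      ENNReal.measurable_ofReal.comp hfd_meas
    have hE' : Measurable fun p : ℝ × ℝ => ENNReal.ofReal (E p) :=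
      ENNReal.measurable_ofReal.comp hEmeas
    rw [lintegral_congr hsec, lintegral_indicator hBmeas, hlaw', restrict_withDensity hBmeas,
      lintegral_withDensity_eq_lintegral_mul _ hfd' hE']
    apply setLIntegral_congr_fun_ae hBmeas
    apply ae_of_all
    intro p hp
    have hfd : fd p = 2 * p.1 / C := by
      simp only [hfdef]
      rw [if_pos (hBbox p hp)]
    have hp1 : (0:ℝ) ≤ p.1 := le_trans hdmin (hBbox p hp).1
    have h2p : (0:ℝ) ≤ 2 * p.1 / C := div_nonneg (by linarith) hC.le
    simp only [Pi.mul_apply]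
    rw [hfd, mul_comm (ENNReal.ofReal (2 * p.1 / C)), ← ENNReal.ofReal_mul' h2p]
  -- denominator as a lintegral
  have hden : P {ω | θth ≤ |Θ ω - θbar| ∧ dth ≤ D ω}
      = ∫⁻ p in B, ENNReal.ofReal (2 * p.1 / C) := by
    rw [measure_congr hden_ae, ← Measure.map_apply hDT hBmeas, hlaw',
      withDensity_apply _ hBmeas]
    apply setLIntegral_congr_fun_ae hBmeas
    apply ae_of_all
    intro p hp
    simp only [hfdef]
    rw [if_pos (hBbox p hp)]
  -- integrability of the numerator integrand on B
  have hgmeas : Measurable fun p : ℝ × ℝ => E p * (2 * p.1 / C) :=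
    hEmeas.mul ((measurable_fst.const_mul 2).div_const C)
  have hBfin : volume B ≠ ⊤ := by
    rw [hBdef, hTdef]
    exact ((isCompact_Icc.prod (isCompact_Icc.union isCompact_Icc)).measure_lt_top).ne
  have hIntg : IntegrableOn (fun p : ℝ × ℝ => E p * (2 * p.1 / C)) B volume := by
    apply Measure.integrableOn_of_bounded (M := 1 * (2 * dmax / C)) hBfin
      hgmeas.aestronglyMeasurable
    apply (ae_restrict_iff' hBmeas).2
    apply ae_of_all
    intro p hp
    have hPLp : 0 < PL p.1 := hPLpos _ (hBbox p hp).1 (hBbox p hp).2.1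
    have hFp : 0 < fejer M θbar p.2 := hFM _ (hBbox p hp).2.2
    have hE := hE01 p hPLp hFp
    have hp1 : (0:ℝ) ≤ p.1 := le_trans hdmin (hBbox p hp).1
    have hp2 : p.1 ≤ dmax := (hBbox p hp).2.1
    rw [Real.norm_eq_abs, abs_mul]
    apply mul_le_mul
    · rw [abs_le]; constructor <;> linarith [hE.1, hE.2]
    · rw [abs_of_nonneg (div_nonneg (by linarith) hC.le)]
      exact (div_le_div_iff_of_pos_right hC).2 (by linarith)
    · exact abs_nonneg _
    · exact zero_le_one
  -- convert numerator lintegral to an integral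
  have hnum_real : (P {ω | G ω ≤ x ∧ θth ≤ |Θ ω - θbar| ∧ dth ≤ D ω}).toReal
      = ∫ p in B, E p * (2 * p.1 / C) := by
    rw [hnum]
    symm
    apply integral_eq_lintegral_of_nonneg_ae
    · apply (ae_restrict_iff' hBmeas).2
      apply ae_of_all
      intro p hp
      have hPLp : 0 < PL p.1 := hPLpos _ (hBbox p hp).1 (hBbox p hp).2.1
      have hFp : 0 < fejer M θbar p.2 := hFM _ (hBbox p hp).2.2
      have hp1 : (0:ℝ) ≤ p.1 := le_trans hdmin (hBbox p hp).1
      exact mul_nonneg (hE01 p hPLp hFp).1 (div_nonneg (by linarith) hC.le)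
    · exact hgmeas.aestronglyMeasurable
  have hden_real : (P {ω | θth ≤ |Θ ω - θbar| ∧ dth ≤ D ω}).toReal
      = ∫ p in B, (2 * p.1 / C) := by
    rw [hden]
    symm
    apply integral_eq_lintegral_of_nonneg_ae
    · apply (ae_restrict_iff' hBmeas).2
      apply ae_of_all
      intro p hp
      have hp1 : (0:ℝ) ≤ p.1 := le_trans hdmin (hBbox p hp).1
      exact div_nonneg (by linarith) hC.le
    · exact ((measurable_fst.const_mul 2).div_const C).aestronglyMeasurable
  -- compute the numerator integral
  have hcalc_num : ∫ p in B, E p * (2 * p.1 / C) = (2 / C) * K := by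
    rw [hBdef] at hIntg ⊢
    rw [Measure.volume_eq_prod ℝ ℝ] at hIntg ⊢
    rw [setIntegral_prod _ hIntg]
    have hinner : ∀ r ∈ Set.Icc dth dmax,
        (∫ θ in T, E (r, θ) * (2 * r / C))
          = (2 / C) * (((∫ θ in (θbar - Δ / 2)..(θbar - θth),
              (1 - Real.exp (-(PL r * x) / (fejer M θbar θ * σ ^ 2)))) +
            (∫ θ in (θbar + θth)..(θbar + Δ / 2),
              (1 - Real.exp (-(PL r * x) / (fejer M θbar θ * σ ^ 2))))) * r) := by
      intro r hr
      obtain ⟨hr1, hr2⟩ := hr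
      have hPLr : 0 < PL r := hPLpos r (le_trans hdth hr1) hr2
      have hmeasθ : Measurable fun θ => E (r, θ) :=
        hEmeas.comp (measurable_const.prodMk measurable_id)
      have hbdd : ∀ s : Set ℝ, s ⊆ Set.Icc (θbar - Δ / 2) (θbar + Δ / 2) → MeasurableSet s →
          IntegrableOn (fun θ => E (r, θ)) s volume := by
        intro s hs hsm
        apply Measure.integrableOn_of_bounded (M := 1)
        · refine ((measure_mono hs).trans_lt ?_).ne
          rw [Real.volume_Icc]
          exact ENNReal.ofReal_lt_top
        · exact hmeasθ.aestronglyMeasurable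
        · apply (ae_restrict_iff' hsm).2
          apply ae_of_all
          intro θ hθ
          have hθ' : |θ - θbar| ≤ Δ / 2 := by
            have h := hs hθ
            rw [Set.mem_Icc] at h
            rw [abs_le]
            constructor <;> linarith [h.1, h.2]
          have hF := hFM θ hθ'
          have hE := hE01 (r, θ) hPLr hF
          rw [Real.norm_eq_abs, abs_le]
          constructor <;> linarith [hE.1, hE.2]
      have hI1 := hbdd (Set.Icc (θbar - Δ / 2) (θbar - θth))
        (Set.Icc_subset_Icc le_rfl (by linarith)) measurableSet_Icc
      have hI2 := hbdd (Set.Icc (θbar + θth) (θbar + Δ / 2))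
        (Set.Icc_subset_Icc (by linarith) le_rfl) measurableSet_Icc
      rw [integral_mul_const, hTdef,
        integral_union_ae hdisj measurableSet_Icc.nullMeasurableSet hI1 hI2,
        integral_Icc_eq_integral_Ioc, integral_Icc_eq_integral_Ioc,
        ← intervalIntegral.integral_of_le (by linarith : θbar - Δ / 2 ≤ θbar - θth),
        ← intervalIntegral.integral_of_le (by linarith : θbar + θth ≤ θbar + Δ / 2)]
      simp only [hEdef]
      ring
    rw [setIntegral_congr_fun measurableSet_Icc hinner, integral_Icc_eq_integral_Ioc,
      ← intervalIntegral.integral_of_le hdth'.le, intervalIntegral.integral_const_mul, hKdef]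
  -- compute the denominator integral
  have hIntd : IntegrableOn (fun p : ℝ × ℝ => 2 * p.1 / C) B volume := by
    apply Measure.integrableOn_of_bounded (M := 2 * dmax / C) hBfin
      ((measurable_fst.const_mul 2).div_const C).aestronglyMeasurable
    apply (ae_restrict_iff' hBmeas).2
    apply ae_of_all
    intro p hp
    have hp1 : (0:ℝ) ≤ p.1 := le_trans hdmin (hBbox p hp).1
    have hp2 : p.1 ≤ dmax := (hBbox p hp).2.1
    rw [Real.norm_eq_abs, abs_of_nonneg (div_nonneg (by linarith) hC.le)]
    exact (div_le_div_iff_of_pos_right hC).2 (by linarith)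
  have hcalc_den : ∫ p in B, (2 * p.1 / C) = (Δ - 2 * θth) * (dmax ^ 2 - dth ^ 2) / C := by
    rw [hBdef] at hIntd ⊢
    rw [Measure.volume_eq_prod] at hIntd ⊢
    rw [setIntegral_prod _ hIntd]
    have hinner : ∀ r ∈ Set.Icc dth dmax,
        (∫ _θ in T, (2 * r / C)) = (Δ - 2 * θth) * (2 * r / C) := by
      intro r _
      rw [setIntegral_const, measureReal_def, hTvol, smul_eq_mul]
    rw [setIntegral_congr_fun measurableSet_Icc hinner, integral_Icc_eq_integral_Ioc,
      ← intervalIntegral.integral_of_le hdth'.le]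
    have hring : ∀ r : ℝ, (Δ - 2 * θth) * (2 * r / C) = ((Δ - 2 * θth) * 2 / C) * r := by
      intro r; ring
    simp_rw [hring]
    rw [intervalIntegral.integral_const_mul, integral_id]
    ring
  -- final assembly
  rw [hnum_real, hden_real, hcalc_num, hcalc_den]
  have h1 : (Δ:ℝ) / 2 - θth ≠ 0 := by linarith
  have h2 : (dmax:ℝ) ^ 2 - dth ^ 2 ≠ 0 := by nlinarith
  have h3 : C ≠ 0 := ne_of_gt hC
  field_simp
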